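/- For the Lie algebra sp(ℓ,R), the Killing form β satisfies β(a,b) = 2(ℓ+1)·tr(ab) for all a, b ∈ sp(ℓ,R). -/

import Mathlib

open LinearMap Matrix
attribute [local instance 100] LieRing.ofAssociativeRing

section helpers
variable {n : Type*} [Fintype n] [DecidableEq n]

/-- The linear map `x ↦ C * x * D` on square matrices. -/
noncomputable def sandwich (C D : Matrix n n ℝ) : Matrix n n ℝ →ₗ[ℝ] Matrix n n ℝ :=
  LinearMap.mulLeft ℝ C ∘ₗ LinearMap.mulRight ℝ D

@[simp] lemma sandwich_apply (C D x : Matrix n n ℝ) : sandwich C D x = C * x * D := by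
  simp only [sandwich, LinearMap.comp_apply, LinearMap.mulLeft_apply, LinearMap.mulRight_apply,
    mul_assoc]

/-- The linear map `x ↦ C * xᵀ * D` on square matrices. -/
noncomputable def tsandwich (C D : Matrix n n ℝ) : Matrix n n ℝ →ₗ[ℝ] Matrix n n ℝ :=
  (sandwich C D) ∘ₗ (Matrix.transposeLinearEquiv n n ℝ ℝ).toLinearMap

@[simp] lemma tsandwich_apply (C D x : Matrix n n ℝ) : tsandwich C D x = C * xᵀ * D := by
  simp [tsandwich, transposeLinearEquiv]

lemma trace_sandwich (C D : Matrix n n ℝ) :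
    LinearMap.trace ℝ _ (sandwich C D) = C.trace * D.trace := by
  rw [LinearMap.trace_eq_matrix_trace ℝ (Matrix.stdBasis ℝ n n), Matrix.trace]
  have h : ∀ p : n × n,
      (LinearMap.toMatrix (Matrix.stdBasis ℝ n n) (Matrix.stdBasis ℝ n n) (sandwich C D)).diag p
        = C p.1 p.1 * D p.2 p.2 := by
    rintro ⟨i, j⟩
    rw [Matrix.diag, LinearMap.toMatrix_apply, Matrix.stdBasis_eq_single, sandwich_apply]
    rw [show ((Matrix.stdBasis ℝ n n).repr (C * Matrix.single i j 1 * D)) (i, j)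
        = (C * Matrix.single i j (1:ℝ) * D) i j by simp [Matrix.stdBasis]]
    simp [Matrix.mul_apply, Matrix.single, of_apply, ite_and, Finset.mul_sum,
      Finset.sum_ite_eq, Finset.sum_ite_eq', mul_ite, ite_mul]
  rw [Finset.sum_congr rfl fun p _ => h p, Matrix.trace, Matrix.trace, Finset.sum_mul_sum]
  rw [← Finset.univ_product_univ, Finset.sum_product]
  rfl

lemma trace_tsandwich (C D : Matrix n n ℝ) :
    LinearMap.trace ℝ _ (tsandwich C D) = (C * Dᵀ).trace := by
  rw [LinearMap.trace_eq_matrix_trace ℝ (Matrix.stdBasis ℝ n n), Matrix.trace]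
  have h : ∀ p : n × n,
      (LinearMap.toMatrix (Matrix.stdBasis ℝ n n) (Matrix.stdBasis ℝ n n) (tsandwich C D)).diag p
        = C p.1 p.2 * D p.1 p.2 := by
    rintro ⟨i, j⟩
    rw [Matrix.diag, LinearMap.toMatrix_apply, Matrix.stdBasis_eq_single, tsandwich_apply]
    rw [show ((Matrix.stdBasis ℝ n n).repr (C * (Matrix.single i j 1)ᵀ * D)) (i, j)
        = (C * (Matrix.single i j (1:ℝ))ᵀ * D) i j by simp [Matrix.stdBasis]]
    simp [Matrix.mul_apply, Matrix.single, of_apply, transpose_apply, ite_and, Finset.mul_sum,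
      Finset.sum_ite_eq, Finset.sum_ite_eq', mul_ite, ite_mul]
  rw [Finset.sum_congr rfl fun p _ => h p]
  rw [Matrix.trace]
  simp only [Matrix.diag, Matrix.mul_apply, transpose_apply]
  rw [← Finset.univ_product_univ, Finset.sum_product]

lemma trace_restrict_of_isProj {R M : Type*} [CommRing R] [AddCommGroup M] [Module R M]
    [Module.Free R M] [Module.Finite R M] {p : Submodule R M} [Module.Free R p]
    [Module.Finite R p] {π : M →ₗ[R] M}
    (hπ : LinearMap.IsProj p π) {f : M →ₗ[R] M} (hf : ∀ x ∈ p, f x ∈ p) :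
    LinearMap.trace R p (f.restrict hf) = LinearMap.trace R M (π ∘ₗ f) := by
  have h1 : f.restrict hf = (hπ.codRestrict ∘ₗ f) ∘ₗ p.subtype := by
    ext x
    simp [LinearMap.restrict_apply, LinearMap.IsProj.codRestrict,
      hπ.map_id _ (hf x.1 x.2)]
  rw [h1, LinearMap.trace_comp_comm']
  congr 1

end helpers

set_option maxHeartbeats 1000000 in
/-- For the symplectic Lie algebra `sp(ℓ,ℝ)` of real `2ℓ × 2ℓ` matrices `a` with
`ᵗa·J + J·a = 0`, the Killing form satisfies `β(a,b) = 2(ℓ+1)·tr(ab)`. -/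
theorem killingForm_sp (ℓ : ℕ)
    (a b : LieAlgebra.Symplectic.sp (Fin ℓ) ℝ) :
    killingForm ℝ (LieAlgebra.Symplectic.sp (Fin ℓ) ℝ) a b
      = 2 * ((ℓ : ℝ) + 1) *
          Matrix.trace ((a : Matrix (Fin ℓ ⊕ Fin ℓ) (Fin ℓ ⊕ Fin ℓ) ℝ) *
            (b : Matrix (Fin ℓ ⊕ Fin ℓ) (Fin ℓ ⊕ Fin ℓ) ℝ)) := by
  classical
  set n := Fin ℓ ⊕ Fin ℓ
  set J' : Matrix n n ℝ := Matrix.J (Fin ℓ) ℝ with hJ'def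
  set A : Matrix n n ℝ := (a : Matrix n n ℝ) with hAdef
  set B : Matrix n n ℝ := (b : Matrix n n ℝ) with hBdef
  have hJ2 : J' * J' = (-1 : Matrix n n ℝ) := Matrix.J_squared _ _
  have hJT : J'ᵀ = -J' := Matrix.J_transpose _ _
  have hJJl : ∀ X : Matrix n n ℝ, J' * (J' * X) = -X := fun X => by
    rw [← Matrix.mul_assoc, hJ2, neg_one_mul]
  -- skew-adjointness of a, b
  have hmem : ∀ x : Matrix n n ℝ, x ∈ LieAlgebra.Symplectic.sp (Fin ℓ) ℝ ↔
      xᵀ * J' = J' * (-x) := fun x =>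
    (mem_skewAdjointMatricesLieSubalgebra _ _).trans (mem_skewAdjointMatricesSubmodule _ _)
  have hconj : ∀ x : Matrix n n ℝ, xᵀ * J' = J' * (-x) → xᵀ = J' * x * J' := by
    intro x hx
    have := congrArg (· * J') hx
    simp only [Matrix.mul_assoc] at this ⊢
    rw [hJ2] at this
    simpa [Matrix.mul_assoc] using this
  have hA : Aᵀ = J' * A * J' := hconj A ((hmem A).mp a.2)
  have hB : Bᵀ = J' * B * J' := hconj B ((hmem B).mp b.2)
  have htr : ∀ x : Matrix n n ℝ, xᵀ = J' * x * J' → x.trace = 0 := by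
    intro x hx
    have h1 : x.trace = xᵀ.trace := (Matrix.trace_transpose x).symm
    rw [hx, Matrix.trace_mul_cycle, hJ2, neg_one_mul, Matrix.trace_neg] at h1
    linarith
  have htrA : A.trace = 0 := htr A hA
  have htrB : B.trace = 0 := htr B hB
  -- the projection onto sp
  set p : Submodule ℝ (Matrix n n ℝ) := (LieAlgebra.Symplectic.sp (Fin ℓ) ℝ).toSubmodule
    with hpdef
  set π : Matrix n n ℝ →ₗ[ℝ] Matrix n n ℝ :=
    (1/2 : ℝ) • (LinearMap.id + tsandwich J' J') with hπdef
  have hπ : LinearMap.IsProj p π := by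
    constructor
    · intro x
      have hmem' : ((1:ℝ)/2) • (x + J' * xᵀ * J') ∈ p := by
        apply Submodule.smul_mem
        have : (x + J' * xᵀ * J') ∈ LieAlgebra.Symplectic.sp (Fin ℓ) ℝ := by
          rw [hmem]
          simp only [Matrix.transpose_add, Matrix.transpose_mul, Matrix.transpose_transpose,
            hJT]
          simp only [Matrix.mul_assoc, Matrix.neg_mul, Matrix.mul_neg, hJJl, hJ2,
            mul_neg_one, neg_neg, mul_add, add_mul, Matrix.mul_neg]
          abel
        exact this
      simpa [hπdef] using hmem'
    · intro x hx
      have hx' : xᵀ = J' * x * J' := hconj x ((hmem x).mp hx)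
      have : J' * xᵀ * J' = x := by
        rw [hx', show J' * (J' * x * J') * J' = (J' * J') * x * (J' * J') by noncomm_ring, hJ2]
        simp
      simp only [hπdef, LinearMap.smul_apply, LinearMap.add_apply, LinearMap.id_apply,
        tsandwich_apply, this, smul_add]
      rw [← add_smul]
      norm_num
  -- the double adjoint map on gl
  set Φ : Matrix n n ℝ →ₗ[ℝ] Matrix n n ℝ :=
    (LieAlgebra.ad ℝ (Matrix n n ℝ) A) ∘ₗ (LieAlgebra.ad ℝ (Matrix n n ℝ) B) with hΦdef
  have hΦmem : ∀ x ∈ p, Φ x ∈ p := by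
    intro x hx
    have : Φ x = ⁅A, ⁅B, x⁆⁆ := by simp [hΦdef]
    rw [this]
    exact (LieAlgebra.Symplectic.sp (Fin ℓ) ℝ).lie_mem a.2
      ((LieAlgebra.Symplectic.sp (Fin ℓ) ℝ).lie_mem b.2 hx)
  -- step 1 : killing form is the trace of the restriction
  have step1 : killingForm ℝ (LieAlgebra.Symplectic.sp (Fin ℓ) ℝ) a b
      = LinearMap.trace ℝ p (Φ.restrict hΦmem) := by
    rw [killingForm_apply_apply]
    congr 1
  rw [step1, trace_restrict_of_isProj hπ hΦmem]
  -- step 2 : decompose π ∘ Φ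
  have hπΦ : π ∘ₗ Φ = (1/2 : ℝ) • (Φ + (tsandwich J' J') ∘ₗ Φ) := by
    rw [hπdef]
    refine LinearMap.ext fun x => ?_
    simp [add_comm]
  rw [hπΦ, _root_.map_smul, _root_.map_add]
  -- step 3 : trace of Φ
  have hΦsand : Φ = sandwich (A*B) 1 - sandwich A B - sandwich B A + sandwich 1 (B*A) := by
    refine LinearMap.ext fun x => ?_
    simp only [hΦdef, LinearMap.comp_apply, LieAlgebra.ad_apply, LinearMap.sub_apply,
      LinearMap.add_apply, sandwich_apply, Ring.lie_def]
    noncomm_ring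
    simp only [neg_smul, one_smul, Matrix.neg_mul, Matrix.mul_neg, neg_neg, Matrix.mul_assoc,
      Matrix.mul_add, Matrix.add_mul]
    abel
  have htrΦ : LinearMap.trace ℝ _ Φ = 2 * (Fintype.card n : ℝ) * (A*B).trace := by
    rw [hΦsand]
    simp only [map_add, map_sub, trace_sandwich]
    rw [Matrix.trace_one, htrA, htrB, Matrix.trace_mul_comm B A]
    ring
  -- step 4 : trace of σ ∘ Φ
  have hσΦ : (tsandwich J' J') ∘ₗ Φ
      = tsandwich J' (Bᵀ*Aᵀ*J') - tsandwich (J'*Bᵀ) (Aᵀ*J')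
        - tsandwich (J'*Aᵀ) (Bᵀ*J') + tsandwich (J'*Aᵀ*Bᵀ) J' := by
    refine LinearMap.ext fun x => ?_
    simp only [LinearMap.comp_apply, tsandwich_apply, LinearMap.sub_apply, LinearMap.add_apply,
      hΦdef, LieAlgebra.ad_apply, Ring.lie_def, Matrix.transpose_sub, Matrix.transpose_mul]
    noncomm_ring
    simp only [neg_smul, one_smul, Matrix.neg_mul, Matrix.mul_neg, neg_neg, Matrix.mul_assoc,
      Matrix.mul_add, Matrix.add_mul]
  have h1 : (J' * (Bᵀ*Aᵀ*J')ᵀ).trace = (A*B).trace := by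
    simp only [Matrix.transpose_mul, Matrix.transpose_transpose, hJT]
    simp only [Matrix.mul_assoc, Matrix.neg_mul, Matrix.mul_neg, hJJl, neg_neg]
  have h2 : ((J'*Bᵀ) * (Aᵀ*J')ᵀ).trace = -(A*B).trace := by
    rw [hA, hB]
    simp only [Matrix.transpose_mul, Matrix.transpose_transpose, hJT]
    simp only [Matrix.mul_assoc, Matrix.neg_mul, Matrix.mul_neg, hJJl, neg_neg]
    rw [Matrix.trace_mul_comm, hA]
    simp [Matrix.mul_assoc, hJJl, hJ2, mul_neg_one]
  have h3 : ((J'*Aᵀ) * (Bᵀ*J')ᵀ).trace = -(A*B).trace := by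
    rw [hA, hB]
    simp only [Matrix.transpose_mul, Matrix.transpose_transpose, hJT]
    simp only [Matrix.mul_assoc, Matrix.neg_mul, Matrix.mul_neg, hJJl, neg_neg]
    rw [hB]
    simp [Matrix.mul_assoc, hJJl, hJ2, mul_neg_one]
  have h4 : ((J'*Aᵀ*Bᵀ) * J'ᵀ).trace = (A*B).trace := by
    rw [hA, hB, hJT]
    simp only [Matrix.mul_assoc, Matrix.neg_mul, Matrix.mul_neg, hJJl, neg_neg]
    rw [Matrix.trace_mul_comm]
    simp [Matrix.mul_assoc, hJJl, hJ2]
    exact Matrix.trace_mul_comm A B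
  have htrσΦ : LinearMap.trace ℝ _ ((tsandwich J' J') ∘ₗ Φ) = 4 * (A*B).trace := by
    rw [hσΦ]
    simp only [map_add, map_sub, trace_tsandwich]
    rw [h1, h2, h3, h4]
    ring
  rw [htrΦ, htrσΦ]
  have hcard : (Fintype.card n : ℝ) = 2 * ℓ := by
    simp [n]
    ring
  rw [hcard]
  simp only [smul_eq_mul]
  ring
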